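/- The centralizer C_G(G') of the derived subgroup G' in G equals the subgroup generated by z, x² and xy, and this subgroup is abelian. -/

import Mathlib

namespace MIP

/-- Relators of the group `G`. -/
def grels (n m : ℕ) : Set (FreeGroup (Fin 3)) :=
  {(FreeGroup.of 2)⁻¹ * ((FreeGroup.of 1)⁻¹ * (FreeGroup.of 0)⁻¹ * FreeGroup.of 1 * FreeGroup.of 0),
   FreeGroup.of 0 ^ (2 ^ n), FreeGroup.of 1 ^ (2 ^ m), FreeGroup.of 2 ^ 4,
   (FreeGroup.of 0)⁻¹ * FreeGroup.of 2 * FreeGroup.of 0 * FreeGroup.of 2,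
   (FreeGroup.of 1)⁻¹ * FreeGroup.of 2 * FreeGroup.of 1 * FreeGroup.of 2}

/-- Relators of the group `H`. -/
def hrels (n m : ℕ) : Set (FreeGroup (Fin 3)) :=
  {(FreeGroup.of 2)⁻¹ * ((FreeGroup.of 1)⁻¹ * (FreeGroup.of 0)⁻¹ * FreeGroup.of 1 * FreeGroup.of 0),
   FreeGroup.of 0 ^ (2 ^ n), FreeGroup.of 1 ^ (2 ^ m), FreeGroup.of 2 ^ 4,
   (FreeGroup.of 0)⁻¹ * FreeGroup.of 2 * FreeGroup.of 0 * FreeGroup.of 2,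
   (FreeGroup.of 1)⁻¹ * FreeGroup.of 2 * FreeGroup.of 1 * (FreeGroup.of 2)⁻¹}

abbrev GG (n m : ℕ) := PresentedGroup (grels n m)
abbrev HH (n m : ℕ) := PresentedGroup (hrels n m)

def gx (n m : ℕ) : GG n m := PresentedGroup.of 0
def gy (n m : ℕ) : GG n m := PresentedGroup.of 1
def gz (n m : ℕ) : GG n m := PresentedGroup.of 2
def ha (n m : ℕ) : HH n m := PresentedGroup.of 0
def hb (n m : ℕ) : HH n m := PresentedGroup.of 1
def hc (n m : ℕ) : HH n m := PresentedGroup.of 2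

section Aux

variable {n m : ℕ}

lemma grel_mk {r : FreeGroup (Fin 3)} (h : r ∈ grels n m) :
    PresentedGroup.mk (grels n m) r = 1 :=
  (QuotientGroup.eq_one_iff _).mpr (Subgroup.subset_normalClosure h)

lemma rel_comm : gy n m * gx n m = gx n m * gy n m * gz n m := by
  have h := grel_mk (n := n) (m := m)
    (r := (FreeGroup.of 2)⁻¹ * ((FreeGroup.of 1)⁻¹ * (FreeGroup.of 0)⁻¹ * FreeGroup.of 1 * FreeGroup.of 0))
    (by simp [grels])
  simp only [map_mul, map_inv] at h
  have hx : PresentedGroup.mk (grels n m) (FreeGroup.of 0) = gx n m := rfl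
  have hy : PresentedGroup.mk (grels n m) (FreeGroup.of 1) = gy n m := rfl
  have hz : PresentedGroup.mk (grels n m) (FreeGroup.of 2) = gz n m := rfl
  rw [hx, hy, hz] at h
  have h2 : gz n m = (gy n m)⁻¹ * (gx n m)⁻¹ * gy n m * gx n m := by
    have := inv_mul_eq_one.mp h
    exact this
  rw [h2]; group

lemma rel_zx : (gx n m)⁻¹ * gz n m * gx n m = (gz n m)⁻¹ := by
  have h := grel_mk (n := n) (m := m)
    (r := (FreeGroup.of 0)⁻¹ * FreeGroup.of 2 * FreeGroup.of 0 * FreeGroup.of 2)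
    (by simp [grels])
  simp only [map_mul, map_inv] at h
  have hx : PresentedGroup.mk (grels n m) (FreeGroup.of 0) = gx n m := rfl
  have hz : PresentedGroup.mk (grels n m) (FreeGroup.of 2) = gz n m := rfl
  rw [hx, hz] at h
  exact eq_inv_of_mul_eq_one_left h

lemma rel_zy : (gy n m)⁻¹ * gz n m * gy n m = (gz n m)⁻¹ := by
  have h := grel_mk (n := n) (m := m)
    (r := (FreeGroup.of 1)⁻¹ * FreeGroup.of 2 * FreeGroup.of 1 * FreeGroup.of 2)
    (by simp [grels])
  simp only [map_mul, map_inv] at h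
  have hy : PresentedGroup.mk (grels n m) (FreeGroup.of 1) = gy n m := rfl
  have hz : PresentedGroup.mk (grels n m) (FreeGroup.of 2) = gz n m := rfl
  rw [hy, hz] at h
  exact eq_inv_of_mul_eq_one_left h

/-- x z⁻¹ x⁻¹ = z -/
lemma rel_zx' : gx n m * (gz n m)⁻¹ * (gx n m)⁻¹ = gz n m := by
  rw [← rel_zx]; group

/-- x z x⁻¹ = z⁻¹ -/
lemma rel_zx'' : gx n m * gz n m * (gx n m)⁻¹ = (gz n m)⁻¹ := by
  calc gx n m * gz n m * (gx n m)⁻¹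
      = (gx n m * (gz n m)⁻¹ * (gx n m)⁻¹)⁻¹ := by group
    _ = (gz n m)⁻¹ := by rw [rel_zx']

/-- x y x⁻¹ = y z -/
lemma rel_xyx : gx n m * gy n m * (gx n m)⁻¹ = gy n m * gz n m := by
  calc gx n m * gy n m * (gx n m)⁻¹
      = (gx n m * gy n m * gz n m) * ((gz n m)⁻¹ * (gx n m)⁻¹) := by group
    _ = (gy n m * gx n m) * ((gz n m)⁻¹ * (gx n m)⁻¹) := by rw [← rel_comm]
    _ = gy n m * (gx n m * (gz n m)⁻¹ * (gx n m)⁻¹) := by group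
    _ = gy n m * gz n m := by rw [rel_zx']

lemma comm_z_x2 : Commute (gz n m) (gx n m ^ 2) := by
  show gz n m * gx n m ^ 2 = gx n m ^ 2 * gz n m
  simp only [pow_two]
  calc gz n m * (gx n m * gx n m)
      = gx n m * ((gx n m)⁻¹ * gz n m * gx n m) * gx n m := by group
    _ = gx n m * (gz n m)⁻¹ * gx n m := by rw [rel_zx]
    _ = gx n m * gx n m * (((gx n m)⁻¹ * gz n m * gx n m)⁻¹) := by group
    _ = gx n m * gx n m * ((gz n m)⁻¹)⁻¹ := by rw [rel_zx]
    _ = gx n m * gx n m * gz n m := by group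

lemma comm_z_xy : Commute (gz n m) (gx n m * gy n m) := by
  show gz n m * (gx n m * gy n m) = gx n m * gy n m * gz n m
  calc gz n m * (gx n m * gy n m)
      = gx n m * ((gx n m)⁻¹ * gz n m * gx n m) * gy n m := by group
    _ = gx n m * (gz n m)⁻¹ * gy n m := by rw [rel_zx]
    _ = gx n m * gy n m * ((gy n m)⁻¹ * gz n m * gy n m)⁻¹ := by group
    _ = gx n m * gy n m * ((gz n m)⁻¹)⁻¹ := by rw [rel_zy]
    _ = gx n m * gy n m * gz n m := by group

lemma comm_x2_xy : Commute (gx n m ^ 2) (gx n m * gy n m) := by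
  show gx n m ^ 2 * (gx n m * gy n m) = gx n m * gy n m * gx n m ^ 2
  simp only [pow_two]
  calc gx n m * gx n m * (gx n m * gy n m)
      = gx n m * gx n m * (gx n m * gy n m * (gx n m)⁻¹) * gx n m := by group
    _ = gx n m * gx n m * (gy n m * gz n m) * gx n m := by rw [rel_xyx]
    _ = gx n m * (gx n m * gy n m * (gx n m)⁻¹) * (gx n m * gz n m * (gx n m)⁻¹)
        * (gx n m * gx n m) := by group
    _ = gx n m * (gy n m * gz n m) * (gx n m * gz n m * (gx n m)⁻¹)
        * (gx n m * gx n m) := by rw [rel_xyx]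
    _ = gx n m * (gy n m * gz n m) * ((gz n m)⁻¹)
        * (gx n m * gx n m) := by rw [rel_zx'']
    _ = gx n m * gy n m * (gx n m * gx n m) := by group

/-- The subgroup generated by z, x², xy. -/
def SG (n m : ℕ) : Subgroup (GG n m) :=
  Subgroup.closure {gz n m, gx n m ^ 2, gx n m * gy n m}

lemma memSz : gz n m ∈ SG n m := Subgroup.subset_closure (by simp)
lemma memSx2 : gx n m ^ 2 ∈ SG n m := Subgroup.subset_closure (by simp)
lemma memSxy : gx n m * gy n m ∈ SG n m := Subgroup.subset_closure (by simp)

lemma conj_z (g : GG n m) :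
    g⁻¹ * gz n m * g = gz n m ∨ g⁻¹ * gz n m * g = (gz n m)⁻¹ := by
  have hg : g ∈ Subgroup.closure (Set.range (PresentedGroup.of (rels := grels n m))) := by
    rw [PresentedGroup.closure_range_of]; exact Subgroup.mem_top g
  induction hg using Subgroup.closure_induction with
  | mem w hw =>
      obtain ⟨i, rfl⟩ := hw
      fin_cases i
      · right; exact rel_zx
      · right; exact rel_zy
      · left
        show (gz n m)⁻¹ * gz n m * gz n m = gz n m
        group
  | one => left; group
  | mul a b _ _ ha hb =>
      have key : (a * b)⁻¹ * gz n m * (a * b) = b⁻¹ * (a⁻¹ * gz n m * a) * b := by group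
      rcases ha with h | h
      · rw [key, h]; exact hb
      · rw [key, h]
        have e : b⁻¹ * (gz n m)⁻¹ * b = (b⁻¹ * gz n m * b)⁻¹ := by group
        rcases hb with h2 | h2
        · right; rw [e, h2]
        · left; rw [e, h2, inv_inv]
  | inv a _ ha =>
      rcases ha with h | h
      · left
        calc a⁻¹⁻¹ * gz n m * a⁻¹ = a * gz n m * a⁻¹ := by group
          _ = a * (a⁻¹ * gz n m * a) * a⁻¹ := by rw [h]
          _ = gz n m := by group
      · right
        have h2 : gz n m = a⁻¹ * (gz n m)⁻¹ * a := by
          rw [show a⁻¹ * (gz n m)⁻¹ * a = (a⁻¹ * gz n m * a)⁻¹ from by group, h, inv_inv]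
        calc a⁻¹⁻¹ * gz n m * a⁻¹ = a * gz n m * a⁻¹ := by group
          _ = a * (a⁻¹ * (gz n m)⁻¹ * a) * a⁻¹ := by rw [← h2]
          _ = (gz n m)⁻¹ := by group

lemma zpowers_normal : (Subgroup.zpowers (gz n m)).Normal := by
  constructor
  intro h hh g
  obtain ⟨k, rfl⟩ := Subgroup.mem_zpowers_iff.mp hh
  have key : g * gz n m ^ k * g⁻¹ = (g * gz n m * g⁻¹) ^ k := conj_zpow.symm
  rcases conj_z (n := n) (m := m) g⁻¹ with hc | hc <;> rw [inv_inv] at hc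
  · rw [key, hc]; exact Subgroup.zpow_mem _ (Subgroup.mem_zpowers _) k
  · rw [key, hc]
    exact Subgroup.zpow_mem _ (Subgroup.inv_mem _ (Subgroup.mem_zpowers _)) k

open commutatorElement in
lemma commutator_le_zp : commutator (GG n m) ≤ Subgroup.zpowers (gz n m) := by
  haveI := zpowers_normal (n := n) (m := m)
  rw [commutator_def, Subgroup.commutator_le]
  intro g _ h _
  set f := QuotientGroup.mk' (Subgroup.zpowers (gz n m)) with hf
  have fz1 : f (gz n m) = 1 := by
    rw [QuotientGroup.mk'_apply, QuotientGroup.eq_one_iff]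
    exact Subgroup.mem_zpowers _
  have hcomm : ∀ a b : GG n m, Commute (f a) (f b) := by
    intro a b
    have htop : Subgroup.closure
        (⇑f '' Set.range (PresentedGroup.of (rels := grels n m))) = ⊤ := by
      rw [← MonoidHom.map_closure f, PresentedGroup.closure_range_of,
        ← MonoidHom.range_eq_map]
      exact MonoidHom.range_eq_top.2 (QuotientGroup.mk'_surjective _)
    have ha : f a ∈ Subgroup.closure (⇑f '' Set.range (PresentedGroup.of (rels := grels n m))) := by
      rw [htop]; exact Subgroup.mem_top _
    have hb : f b ∈ Subgroup.closure (⇑f '' Set.range (PresentedGroup.of (rels := grels n m))) := by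
      rw [htop]; exact Subgroup.mem_top _
    have fxy : Commute (f (gx n m)) (f (gy n m)) := by
      show f (gx n m) * f (gy n m) = f (gy n m) * f (gx n m)
      calc f (gx n m) * f (gy n m) = f (gx n m * gy n m) := (map_mul f _ _).symm
        _ = f (gx n m * gy n m) * 1 := (mul_one _).symm
        _ = f (gx n m * gy n m) * f (gz n m) := by rw [fz1]
        _ = f (gx n m * gy n m * gz n m) := (map_mul f _ _).symm
        _ = f (gy n m * gx n m) := by rw [← rel_comm]
        _ = f (gy n m) * f (gx n m) := map_mul f _ _
    refine Subgroup.closure_induction₂ (p := fun u v _ _ => Commute u v)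
      ?_ ?_ ?_ ?_ ?_ ?_ ?_ ha hb
    · rintro _ _ ⟨_, ⟨i, rfl⟩, rfl⟩ ⟨_, ⟨j, rfl⟩, rfl⟩
      fin_cases i <;> fin_cases j
      · exact Commute.refl _
      · exact fxy
      · show Commute (f (gx n m)) (f (gz n m)); rw [fz1]; exact Commute.one_right _
      · exact fxy.symm
      · exact Commute.refl _
      · show Commute (f (gy n m)) (f (gz n m)); rw [fz1]; exact Commute.one_right _
      · show Commute (f (gz n m)) (f (gx n m)); rw [fz1]; exact Commute.one_left _
      · show Commute (f (gz n m)) (f (gy n m)); rw [fz1]; exact Commute.one_left _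
      · exact Commute.refl _
    · exact fun x _ => Commute.one_left x
    · exact fun x _ => Commute.one_right x
    · exact fun _ _ _ _ _ _ h1 h2 => h1.mul_left h2
    · exact fun _ _ _ _ _ _ h1 h2 => h1.mul_right h2
    · exact fun _ _ _ _ h1 => h1.inv_left
    · exact fun _ _ _ _ h1 => h1.inv_right
  have : f ⁅g, h⁆ = 1 := by
    rw [map_commutatorElement]
    exact commutatorElement_eq_one_iff_commute.mpr (hcomm g h)
  rw [QuotientGroup.mk'_apply, QuotientGroup.eq_one_iff] at this
  exact this

lemma conjx_mem {s : GG n m} (hs : s ∈ SG n m) : (gx n m)⁻¹ * s * gx n m ∈ SG n m := by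
  induction hs using Subgroup.closure_induction with
  | mem w hw =>
      simp only [Set.mem_insert_iff, Set.mem_singleton_iff] at hw
      rcases hw with rfl | rfl | rfl
      · rw [rel_zx]; exact inv_mem memSz
      · rw [show (gx n m)⁻¹ * gx n m ^ 2 * gx n m = gx n m ^ 2 from by
          simp only [pow_two]; group]
        exact memSx2
      · rw [show (gx n m)⁻¹ * (gx n m * gy n m) * gx n m = gy n m * gx n m from by group,
          rel_comm]
        exact mul_mem memSxy memSz
  | one => rw [show (gx n m)⁻¹ * 1 * gx n m = 1 from by group]; exact one_mem _
  | mul a b _ _ ha hb =>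
      rw [show (gx n m)⁻¹ * (a * b) * gx n m
          = ((gx n m)⁻¹ * a * gx n m) * ((gx n m)⁻¹ * b * gx n m) from by group]
      exact mul_mem ha hb
  | inv a _ ha =>
      rw [show (gx n m)⁻¹ * a⁻¹ * gx n m = ((gx n m)⁻¹ * a * gx n m)⁻¹ from by group]
      exact inv_mem ha

lemma cover (g : GG n m) : g ∈ SG n m ∨ (gx n m)⁻¹ * g ∈ SG n m := by
  have hg : g ∈ Subgroup.closure (Set.range (PresentedGroup.of (rels := grels n m))) := by
    rw [PresentedGroup.closure_range_of]; exact Subgroup.mem_top g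
  induction hg using Subgroup.closure_induction with
  | mem w hw =>
      obtain ⟨i, rfl⟩ := hw
      fin_cases i
      · right
        show (gx n m)⁻¹ * gx n m ∈ SG n m
        rw [inv_mul_cancel]; exact one_mem _
      · right
        show (gx n m)⁻¹ * gy n m ∈ SG n m
        rw [show (gx n m)⁻¹ * gy n m = (gx n m ^ 2)⁻¹ * (gx n m * gy n m) from by
          simp only [pow_two]; group]
        exact mul_mem (inv_mem memSx2) memSxy
      · left; exact memSz
  | one => left; exact one_mem _
  | mul a b _ _ ha hb =>
      rcases ha with ha | ha <;> rcases hb with hb | hb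
      · left; exact mul_mem ha hb
      · right
        rw [show (gx n m)⁻¹ * (a * b)
            = ((gx n m)⁻¹ * a * gx n m) * ((gx n m)⁻¹ * b) from by group]
        exact mul_mem (conjx_mem ha) hb
      · right
        rw [show (gx n m)⁻¹ * (a * b) = ((gx n m)⁻¹ * a) * b from by group]
        exact mul_mem ha hb
      · left
        rw [show a * b = gx n m ^ 2 * ((gx n m)⁻¹ * ((gx n m)⁻¹ * a) * gx n m)
            * ((gx n m)⁻¹ * b) from by simp only [pow_two]; group]
        exact mul_mem (mul_mem memSx2 (conjx_mem ha)) hb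
  | inv a _ ha =>
      rcases ha with ha | ha
      · left; exact inv_mem ha
      · right
        rw [show (gx n m)⁻¹ * a⁻¹
            = ((gx n m)⁻¹ * ((gx n m)⁻¹ * a)⁻¹ * gx n m) * (gx n m ^ 2)⁻¹ from by
          simp only [pow_two]; group]
        exact mul_mem (conjx_mem (inv_mem ha)) (inv_mem memSx2)

def dmap : Fin 3 → DihedralGroup 8 := fun i =>
  if i = 0 then DihedralGroup.sr 0 else if i = 1 then DihedralGroup.sr 1 else DihedralGroup.r 6

lemma drels (hn : n ≠ 0) (hm : m ≠ 0) :
    ∀ r ∈ grels n m, FreeGroup.lift dmap r = 1 := by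
  intro r hr
  simp only [grels, Set.mem_insert_iff, Set.mem_singleton_iff] at hr
  have hsq : ∀ i : ZMod 8, (DihedralGroup.sr i) ^ 2 = 1 := by decide
  rcases hr with rfl | rfl | rfl | rfl | rfl | rfl
  · simp only [map_mul, map_inv, FreeGroup.lift_apply_of]
    decide
  · obtain ⟨k, rfl⟩ := Nat.exists_eq_succ_of_ne_zero hn
    rw [map_pow, FreeGroup.lift_apply_of, pow_succ' 2 k, pow_mul]
    rw [show dmap 0 = DihedralGroup.sr 0 from rfl, hsq, one_pow]
  · obtain ⟨k, rfl⟩ := Nat.exists_eq_succ_of_ne_zero hm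
    rw [map_pow, FreeGroup.lift_apply_of, pow_succ' 2 k, pow_mul]
    rw [show dmap 1 = DihedralGroup.sr 1 from rfl, hsq, one_pow]
  · rw [map_pow, FreeGroup.lift_apply_of]
    decide
  · simp only [map_mul, map_inv, FreeGroup.lift_apply_of]
    decide
  · simp only [map_mul, map_inv, FreeGroup.lift_apply_of]
    decide

def phi (hn : n ≠ 0) (hm : m ≠ 0) : GG n m →* DihedralGroup 8 :=
  PresentedGroup.toGroup (drels hn hm)

lemma phi_x (hn : n ≠ 0) (hm : m ≠ 0) : phi hn hm (gx n m) = DihedralGroup.sr 0 :=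
  PresentedGroup.toGroup.of (drels hn hm)

lemma phi_y (hn : n ≠ 0) (hm : m ≠ 0) : phi hn hm (gy n m) = DihedralGroup.sr 1 :=
  PresentedGroup.toGroup.of (drels hn hm)

lemma phi_z (hn : n ≠ 0) (hm : m ≠ 0) : phi hn hm (gz n m) = DihedralGroup.r 6 :=
  PresentedGroup.toGroup.of (drels hn hm)

lemma phiS (hn : n ≠ 0) (hm : m ≠ 0) {s : GG n m} (hs : s ∈ SG n m) :
    ∃ i : ZMod 8, phi hn hm s = DihedralGroup.r i := by
  induction hs using Subgroup.closure_induction with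
  | mem w hw =>
      simp only [Set.mem_insert_iff, Set.mem_singleton_iff] at hw
      rcases hw with rfl | rfl | rfl
      · exact ⟨6, phi_z hn hm⟩
      · refine ⟨0, ?_⟩
        rw [map_pow, phi_x hn hm]
        decide
      · refine ⟨1, ?_⟩
        rw [map_mul, phi_x hn hm, phi_y hn hm]
        decide
  | one => exact ⟨0, by rw [map_one]; decide⟩
  | mul a b _ _ ha hb =>
      obtain ⟨i, hi⟩ := ha; obtain ⟨j, hj⟩ := hb
      exact ⟨i + j, by rw [map_mul, hi, hj, DihedralGroup.r_mul_r]⟩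
  | inv a _ ha =>
      obtain ⟨i, hi⟩ := ha
      refine ⟨-i, ?_⟩
      rw [map_inv, hi]
      rfl

open commutatorElement in
lemma gz_mem_commutator : gz n m ∈ commutator (GG n m) := by
  have e : gz n m = ⁅(gy n m)⁻¹, (gx n m)⁻¹⁆ := by
    rw [commutatorElement_def]
    rw [show (gy n m)⁻¹ * (gx n m)⁻¹ * ((gy n m)⁻¹)⁻¹ * ((gx n m)⁻¹)⁻¹
        = (gx n m * gy n m)⁻¹ * (gy n m * gx n m) from by group, rel_comm]
    group
  rw [e, commutator_def]
  exact Subgroup.commutator_mem_commutator (Subgroup.mem_top _) (Subgroup.mem_top _)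


end Aux

/-- The centralizer `C_G(G')` of the derived subgroup `G'` in `G` equals
the subgroup generated by `z`, `x²` and `xy`, and this subgroup is abelian. -/
theorem statement_6 (n m : ℕ) (hm : 2 < m) (hmn : m < n) :
    Subgroup.centralizer (commutator (GG n m) : Set (GG n m)) =
      Subgroup.closure {gz n m, gx n m ^ 2, gx n m * gy n m} ∧
    IsMulCommutative (Subgroup.closure {gz n m, gx n m ^ 2, gx n m * gy n m}) := by
  have hn0 : n ≠ 0 := by omega
  have hm0 : m ≠ 0 := by omega
  constructor
  · apply le_antisymm
    · intro g hg
      have hzg : gz n m * g = g * gz n m :=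
        Subgroup.mem_centralizer_iff.mp hg _ gz_mem_commutator
      rcases cover g with h | h
      · exact h
      · exfalso
        obtain ⟨i, hi⟩ := phiS hn0 hm0 h
        have e1 : phi hn0 hm0 g = DihedralGroup.sr i := by
          rw [show g = gx n m * ((gx n m)⁻¹ * g) from by group, map_mul, phi_x, hi,
            DihedralGroup.sr_mul_r, zero_add]
        have e2 := congrArg (phi hn0 hm0) hzg
        rw [map_mul, map_mul, e1, phi_z, DihedralGroup.r_mul_sr,
          DihedralGroup.sr_mul_r] at e2
        have e3 : i - 6 = i + 6 := by
          simpa using e2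
        rw [sub_eq_add_neg] at e3
        have e4 := add_left_cancel e3
        revert e4
        decide
    · rw [Subgroup.closure_le]
      intro w hw
      rw [SetLike.mem_coe, Subgroup.mem_centralizer_iff]
      intro t ht
      obtain ⟨k, rfl⟩ := Subgroup.mem_zpowers_iff.mp (commutator_le_zp ht)
      have hzw : Commute (gz n m) w := by
        simp only [Set.mem_insert_iff, Set.mem_singleton_iff] at hw
        rcases hw with rfl | rfl | rfl
        · exact Commute.refl _
        · exact comm_z_x2
        · exact comm_z_xy
      exact (hzw.zpow_left k).eq
  · constructor
    constructor
    rintro ⟨a, ha⟩ ⟨b, hb⟩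
    refine Subtype.ext ?_
    show a * b = b * a
    refine (Subgroup.closure_induction₂ (p := fun u v _ _ => Commute u v)
      ?_ ?_ ?_ ?_ ?_ ?_ ?_ ha hb).eq
    · intro u v hu hv
      simp only [Set.mem_insert_iff, Set.mem_singleton_iff] at hu hv
      rcases hu with rfl | rfl | rfl <;> rcases hv with rfl | rfl | rfl
      · exact Commute.refl _
      · exact comm_z_x2
      · exact comm_z_xy
      · exact comm_z_x2.symm
      · exact Commute.refl _
      · exact comm_x2_xy
      · exact comm_z_xy.symm
      · exact comm_x2_xy.symm
      · exact Commute.refl _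
    · exact fun x _ => Commute.one_left x
    · exact fun x _ => Commute.one_right x
    · exact fun _ _ _ _ _ _ h1 h2 => h1.mul_left h2
    · exact fun _ _ _ _ _ _ h1 h2 => h1.mul_right h2
    · exact fun _ _ _ _ h1 => h1.inv_left
    · exact fun _ _ _ _ h1 => h1.inv_right

end MIP
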